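/- Fix π, σ ∈ S_n, λ ∈ (0,1/2), and p ∈ (0,1]. Let P_π denote the distribution of the observations in the noisy sorting model with probability matrix M*_n(λ) and underlying permutation π under sampling model (O1); that is, P_π is the product over the (n choose 2) unordered pairs {i,j} of the three-point distribution assigning probability 1−p to 'not compared', probability p·[M*_n(λ)]_{π(i),π(j)} to 'i wins', and probability p·[M*_n(λ)]_{π(j),π(i)} to 'j wins'. Then KL(P_π ‖ P_σ) = 2·d_KT(π, σ)·p·λ·log((1+2λ)/(1−2λ)). -/

import Mathlib

open Finset

/-- Kendall tau distance between two permutations of `Fin n`. -/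
def dKT (n : ℕ) (π σ : Equiv.Perm (Fin n)) : ℕ :=
  (Finset.univ.filter fun q : Fin n × Fin n => σ q.1 < σ q.2 ∧ π q.2 < π q.1).card

/-- The matrix `M*_n(λ)`. -/
noncomputable def Mstar (n : ℕ) (lam : ℝ) (i j : Fin n) : ℝ :=
  if j < i then 1 / 2 + lam else if i < j then 1 / 2 - lam else 1 / 2

abbrev Pairs (n : ℕ) := {q : Fin n × Fin n // q.1 < q.2}

/-- Observations in sampling model (O1): for each unordered pair, either no comparison
(`none`), or the smaller-index item wins (`some true`), or it loses (`some false`). -/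
abbrev Obs1 (n : ℕ) := Pairs n → Option Bool

/-- The probability mass function of the observations in the noisy sorting model with
underlying permutation `πs` and probability matrix `M` under sampling model (O1): product
over pairs of `1-p` (not compared), `p·M_{πs i, πs j}` (`i` wins), `p·(1 − M_{πs i, πs j})`
(`j` wins). -/
noncomputable def prob1 (n : ℕ) (p : ℝ) (M : Fin n → Fin n → ℝ) (πs : Equiv.Perm (Fin n))
    (ω : Obs1 n) : ℝ :=
  ∏ q : Pairs n,
    match ω q with
    | none => 1 - p
    | some true => p * M (πs q.1.1) (πs q.1.2)
    | some false => p * (1 - M (πs q.1.1) (πs q.1.2))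

/-- Kullback–Leibler divergence between two probability mass functions on a fintype. -/
noncomputable def klFin {α : Type*} [Fintype α] (P Q : α → ℝ) : ℝ :=
  ∑ a : α, P a * Real.log (P a / Q a)

/- auxiliary material -/

lemma klFin_prod {ι β : Type*} [Fintype ι] [DecidableEq ι] [Fintype β]
    (f g : ι → β → ℝ)
    (hfg : ∀ i x, f i x = 0 ↔ g i x = 0)
    (hf1 : ∀ i, ∑ x, f i x = 1) :
    klFin (fun ω : ι → β => ∏ i, f i (ω i)) (fun ω => ∏ i, g i (ω i)) =
      ∑ i, klFin (f i) (g i) := by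
  have key : ∀ ω : ι → β,
      (∏ i, f i (ω i)) * Real.log ((∏ i, f i (ω i)) / (∏ i, g i (ω i)))
        = ∑ i, (∏ j, f j (ω j)) * Real.log (f i (ω i) / g i (ω i)) := by
    intro ω
    by_cases h : ∀ i, f i (ω i) ≠ 0
    · have hg : ∀ i, g i (ω i) ≠ 0 := fun i hz => h i ((hfg i _).2 hz)
      rw [← Finset.prod_div_distrib,
        Real.log_prod (fun i _ => div_ne_zero (h i) (hg i)), Finset.mul_sum]
    · push_neg at h
      obtain ⟨i, hi⟩ := h
      have hzero : (∏ j, f j (ω j)) = 0 :=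
        Finset.prod_eq_zero (Finset.mem_univ i) hi
      simp [hzero]
  unfold klFin
  simp only [key]
  rw [Finset.sum_comm]
  refine Finset.sum_congr rfl fun i _ => ?_
  have hstep : ∀ ω : ι → β,
      (∏ j, f j (ω j)) * Real.log (f i (ω i) / g i (ω i))
        = ∏ j, (fun j x => if j = i then f j x * Real.log (f j x / g j x) else f j x) j (ω j) := by
    intro ω
    have hcongr : (∏ j, (if j = i then f j (ω j) * Real.log (f j (ω j) / g j (ω j)) else f j (ω j)))
        = (f i (ω i) * Real.log (f i (ω i) / g i (ω i))) * ∏ j ∈ univ.erase i, f j (ω j) := by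
      rw [← Finset.mul_prod_erase univ _ (Finset.mem_univ i), if_pos rfl]
      congr 1
      exact Finset.prod_congr rfl fun j hj => if_neg (Finset.ne_of_mem_erase hj)
    simp only [hcongr]
    rw [← Finset.mul_prod_erase univ (fun j => f j (ω j)) (Finset.mem_univ i)]
    ring
  simp only [hstep]
  rw [← Fintype.prod_sum (fun j x => if j = i then f j x * Real.log (f j x / g j x) else f j x)]
  rw [Finset.prod_eq_single i]
  · simp [klFin]
  · intro j _ hj
    simp only [if_neg hj]
    exact hf1 j
  · intro h; exact absurd (Finset.mem_univ i) h

noncomputable def coordP (n : ℕ) (p : ℝ) (M : Fin n → Fin n → ℝ) (πs : Equiv.Perm (Fin n))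
    (q : Pairs n) (x : Option Bool) : ℝ :=
  match x with
  | none => 1 - p
  | some true => p * M (πs q.1.1) (πs q.1.2)
  | some false => p * (1 - M (πs q.1.1) (πs q.1.2))

lemma prob1_eq (n : ℕ) (p : ℝ) (M : Fin n → Fin n → ℝ) (πs : Equiv.Perm (Fin n)) :
    prob1 n p M πs = fun ω => ∏ q : Pairs n, coordP n p M πs q (ω q) := rfl

lemma sum_optionBool {f : Option Bool → ℝ} :
    ∑ x : Option Bool, f x = f none + (f (some true) + f (some false)) := by
  rw [Fintype.sum_option, Fintype.sum_bool]

lemma kl3 (p a b : ℝ) (hp0 : 0 < p) :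
    klFin (fun x : Option Bool => match x with
            | none => 1 - p | some true => p * a | some false => p * (1 - a))
          (fun x : Option Bool => match x with
            | none => 1 - p | some true => p * b | some false => p * (1 - b))
      = p * (a * Real.log (a / b) + (1 - a) * Real.log ((1 - a) / (1 - b))) := by
  unfold klFin
  rw [sum_optionBool]
  have h1 : (1 - p) * Real.log ((1 - p) / (1 - p)) = 0 := by
    rcases eq_or_ne (1 - p) 0 with h | h
    · rw [h]; ring
    · rw [div_self h, Real.log_one]; ring
  have h2 : (p * a) / (p * b) = a / b := mul_div_mul_left a b hp0.ne'
  have h3 : (p * (1 - a)) / (p * (1 - b)) = (1 - a) / (1 - b) :=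
    mul_div_mul_left _ _ hp0.ne'
  simp only [h2, h3]
  rw [h1]
  ring

/-- **Lemma 4, model (O1).**  For the noisy sorting model with matrix `M*_n(λ)` under
sampling model (O1), `KL(P_π ‖ P_σ) = 2 d_KT(π,σ) p λ log((1+2λ)/(1-2λ))`. -/
theorem kl_noisy_sorting_O1 (n : ℕ) (π σ : Equiv.Perm (Fin n)) (lam p : ℝ)
    (hlam0 : 0 < lam) (hlam : lam < 1 / 2) (hp0 : 0 < p) (hp1 : p ≤ 1) :
    klFin (prob1 n p (Mstar n lam) π) (prob1 n p (Mstar n lam) σ) =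
      2 * (dKT n π σ : ℝ) * p * lam * Real.log ((1 + 2 * lam) / (1 - 2 * lam)) := by
  have hx0 : (0:ℝ) < 1 / 2 + lam := by linarith
  have hy0 : (0:ℝ) < 1 / 2 - lam := by linarith
  -- Mstar facts
  have hM : ∀ a b : Fin n, a ≠ b →
      Mstar n lam a b = if b < a then 1 / 2 + lam else 1 / 2 - lam := by
    intro a b hab
    unfold Mstar
    rcases lt_or_gt_of_ne hab with h | h
    · rw [if_neg (asymm h), if_pos h, if_neg (asymm h)]
    · rw [if_pos h, if_pos h]
  have hMpos : ∀ a b : Fin n, a ≠ b → 0 < Mstar n lam a b := by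
    intro a b hab; rw [hM a b hab]; split <;> linarith
  have hMlt : ∀ a b : Fin n, a ≠ b → Mstar n lam a b < 1 := by
    intro a b hab; rw [hM a b hab]; split <;> linarith
  set L := Real.log ((1 + 2 * lam) / (1 - 2 * lam)) with hL
  set C := 2 * p * lam * L with hC
  have hne : ∀ q : Pairs n, ∀ τ : Equiv.Perm (Fin n), τ q.1.1 ≠ τ q.1.2 :=
    fun q τ h => absurd (τ.injective h) (ne_of_lt q.2)
  -- coordP sums to 1 and shares zeros
  have hfg : ∀ (q : Pairs n) (x : Option Bool),
      coordP n p (Mstar n lam) π q x = 0 ↔ coordP n p (Mstar n lam) σ q x = 0 := by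
    intro q x
    cases x with
    | none => exact Iff.rfl
    | some b =>
      cases b <;>
      · constructor <;> intro h <;> exact absurd h
          (by
            apply ne_of_gt
            apply mul_pos hp0
            first
              | exact hMpos _ _ (hne q _)
              | linarith [hMlt (π q.1.1) (π q.1.2) (hne q π), hMlt (σ q.1.1) (σ q.1.2) (hne q σ)])
  have hsum : ∀ q : Pairs n, ∑ x : Option Bool, coordP n p (Mstar n lam) π q x = 1 := by
    intro q
    rw [sum_optionBool]
    show (1 - p) + (p * Mstar n lam (π q.1.1) (π q.1.2)
      + p * (1 - Mstar n lam (π q.1.1) (π q.1.2))) = 1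
    ring
  -- per-pair KL value
  have hpair : ∀ q : Pairs n,
      klFin (coordP n p (Mstar n lam) π q) (coordP n p (Mstar n lam) σ q)
        = if (π q.1.1 < π q.1.2 ↔ σ q.1.1 < σ q.1.2) then 0 else C := by
    intro q
    have hπ := hne q π
    have hσ := hne q σ
    have hk := kl3 p (Mstar n lam (π q.1.1) (π q.1.2)) (Mstar n lam (σ q.1.1) (σ q.1.2)) hp0
    have hcoord : coordP n p (Mstar n lam) π q =
        (fun x : Option Bool => match x with
          | none => 1 - p | some true => p * Mstar n lam (π q.1.1) (π q.1.2)
          | some false => p * (1 - Mstar n lam (π q.1.1) (π q.1.2))) := by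
      funext x; cases x with
      | none => rfl
      | some b => cases b <;> rfl
    have hcoord' : coordP n p (Mstar n lam) σ q =
        (fun x : Option Bool => match x with
          | none => 1 - p | some true => p * Mstar n lam (σ q.1.1) (σ q.1.2)
          | some false => p * (1 - Mstar n lam (σ q.1.1) (σ q.1.2))) := by
      funext x; cases x with
      | none => rfl
      | some b => cases b <;> rfl
    rw [hcoord, hcoord', hk, hM _ _ hπ, hM _ _ hσ]
    have hlogdiff : Real.log (1/2 + lam) - Real.log (1/2 - lam) = L := by
      rw [hL, ← Real.log_div hx0.ne' hy0.ne']
      congr 1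
      rw [div_eq_div_iff hy0.ne' (by linarith : (1:ℝ) - 2 * lam ≠ 0)]
      ring
    have e1 : (1:ℝ) - (1/2 - lam) = 1/2 + lam := by ring
    have e2 : (1:ℝ) - (1/2 + lam) = 1/2 - lam := by ring
    rcases lt_or_gt_of_ne hπ with h1 | h1 <;> rcases lt_or_gt_of_ne hσ with h2 | h2
    · -- both increasing: agree
      rw [if_neg (asymm h1), if_neg (asymm h2), if_pos (iff_of_true h1 h2),
        div_self hy0.ne', Real.log_one, e1, div_self hx0.ne', Real.log_one]
      ring
    · -- π increasing, σ decreasing: disagree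
      rw [if_neg (asymm h1), if_pos h2,
        if_neg (fun h => absurd (h.mp h1) (asymm h2)), e1, e2,
        Real.log_div hy0.ne' hx0.ne', Real.log_div hx0.ne' hy0.ne', hC, ← hlogdiff]
      ring
    · -- π decreasing, σ increasing: disagree
      rw [if_pos h1, if_neg (asymm h2),
        if_neg (fun h => absurd (h.mpr h2) (asymm h1)), e1, e2,
        Real.log_div hx0.ne' hy0.ne', Real.log_div hy0.ne' hx0.ne', hC, ← hlogdiff]
      ring
    · -- both decreasing: agree
      rw [if_pos h1, if_pos h2, if_pos (iff_of_false (asymm h1) (asymm h2)),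
        div_self hx0.ne', Real.log_one, e2, div_self hy0.ne', Real.log_one]
      ring
  -- tensorize
  rw [prob1_eq, prob1_eq, klFin_prod _ _ hfg hsum]
  simp only [hpair]
  -- convert subtype sum to filter sum
  have hsub :
      ∑ q : Pairs n, (if (π q.1.1 < π q.1.2 ↔ σ q.1.1 < σ q.1.2) then (0:ℝ) else C)
        = ∑ r ∈ univ.filter (fun r : Fin n × Fin n => r.1 < r.2),
            (if (π r.1 < π r.2 ↔ σ r.1 < σ r.2) then (0:ℝ) else C) := by
    rw [Finset.sum_subtype (p := fun r : Fin n × Fin n => r.1 < r.2)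
      (univ.filter (fun r : Fin n × Fin n => r.1 < r.2)) (fun r => by simp)
      (fun r => if (π r.1 < π r.2 ↔ σ r.1 < σ r.2) then (0:ℝ) else C)]
  rw [hsub]
  have hsplit :
      ∑ r ∈ univ.filter (fun r : Fin n × Fin n => r.1 < r.2),
          (if (π r.1 < π r.2 ↔ σ r.1 < σ r.2) then (0:ℝ) else C)
        = ((univ.filter fun r : Fin n × Fin n =>
            r.1 < r.2 ∧ ¬(π r.1 < π r.2 ↔ σ r.1 < σ r.2)).card : ℝ) * C := by
    rw [← Finset.filter_filter]
    calc ∑ r ∈ univ.filter (fun r : Fin n × Fin n => r.1 < r.2),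
            (if (π r.1 < π r.2 ↔ σ r.1 < σ r.2) then (0:ℝ) else C)
        = ∑ r ∈ univ.filter (fun r : Fin n × Fin n => r.1 < r.2),
            (if ¬(π r.1 < π r.2 ↔ σ r.1 < σ r.2) then C else (0:ℝ)) := by
          refine Finset.sum_congr rfl fun r _ => ?_
          by_cases h : (π r.1 < π r.2 ↔ σ r.1 < σ r.2) <;> simp [h]
      _ = ∑ r ∈ (univ.filter (fun r : Fin n × Fin n => r.1 < r.2)).filter
            (fun r => ¬(π r.1 < π r.2 ↔ σ r.1 < σ r.2)), C := (Finset.sum_filter _ _).symm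
      _ = ((univ.filter (fun r : Fin n × Fin n => r.1 < r.2)).filter
            (fun r => ¬(π r.1 < π r.2 ↔ σ r.1 < σ r.2))).card • C := Finset.sum_const C
      _ = _ := nsmul_eq_mul _ _
  rw [hsplit]
  -- counting: the number of discordant pairs equals the Kendall tau distance
  have hcard : (univ.filter fun r : Fin n × Fin n =>
      r.1 < r.2 ∧ ¬(π r.1 < π r.2 ↔ σ r.1 < σ r.2)).card = dKT n π σ := by
    unfold dKT
    symm
    apply Finset.card_bij (fun (r : Fin n × Fin n) _ => if r.1 < r.2 then r else (r.2, r.1))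
    · intro r hr
      simp only [Finset.mem_filter, Finset.mem_univ, true_and] at hr ⊢
      by_cases h : r.1 < r.2
      · rw [if_pos h]
        exact ⟨h, fun hiff => absurd (hiff.mpr hr.1) (asymm hr.2)⟩
      · have hne12 : r.1 ≠ r.2 := fun e => absurd hr.1 (by rw [e]; exact lt_irrefl _)
        have h' : r.2 < r.1 := lt_of_le_of_ne (not_lt.1 h) (fun e => hne12 e.symm)
        rw [if_neg h]
        exact ⟨h', fun hiff => absurd (hiff.mp hr.2) (asymm hr.1)⟩
    · intro r hr s hs h
      simp only [Finset.mem_filter, Finset.mem_univ, true_and] at hr hs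
      by_cases h1 : r.1 < r.2 <;> by_cases h2 : s.1 < s.2
      · rwa [if_pos h1, if_pos h2] at h
      · rw [if_pos h1, if_neg h2] at h
        rw [h] at hr
        exact absurd hs.1 (asymm hr.1)
      · rw [if_neg h1, if_pos h2] at h
        rw [← h] at hs
        exact absurd hr.1 (asymm hs.1)
      · rw [if_neg h1, if_neg h2] at h
        have h3 := Prod.ext_iff.mp h
        exact Prod.ext_iff.mpr ⟨h3.2, h3.1⟩
    · intro t ht
      simp only [Finset.mem_filter, Finset.mem_univ, true_and] at ht
      obtain ⟨hlt, hniff⟩ := ht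
      have hne12 : t.1 ≠ t.2 := ne_of_lt hlt
      by_cases hπt : π t.1 < π t.2
      · have hσt : ¬ σ t.1 < σ t.2 := fun h => hniff (iff_of_true hπt h)
        have hσt' : σ t.2 < σ t.1 :=
          lt_of_le_of_ne (not_lt.1 hσt) (fun e => hne12 (σ.injective e).symm)
        refine ⟨(t.2, t.1), ?_, ?_⟩
        · simp only [Finset.mem_filter, Finset.mem_univ, true_and]
          exact ⟨hσt', hπt⟩
        · rw [if_neg (asymm hlt)]
      · have hπt' : π t.2 < π t.1 :=
          lt_of_le_of_ne (not_lt.1 hπt) (fun e => hne12 (π.injective e).symm)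
        have hσt : σ t.1 < σ t.2 := by
          by_contra h
          exact hniff (iff_of_false hπt h)
        refine ⟨t, ?_, ?_⟩
        · simp only [Finset.mem_filter, Finset.mem_univ, true_and]
          exact ⟨hσt, hπt'⟩
        · rw [if_pos hlt]
  rw [hcard, hC]
  ring
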